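/- Let C₁ be the quotient of the free noncommutative ℤ/2-algebra on two generators a₁, a₂ by the two-sided ideal generated by a₁a₂ − 1 and a₂a₁ − 1, and let C₂ be the quotient of the free noncommutative ℤ/2-algebra on three generators a₁, a₂, a₃ by the two-sided ideal generated by a₂a₁ − 1 and a₂a₃ − 1. Then there is no ℤ/2-algebra isomorphism between C₁ and C₂. -/

import Mathlib

noncomputable section

/-- The quotient of a ℤ/2-algebra by a ring congruence is again a ℤ/2-algebra,
via the quotient map. -/
noncomputable instance ringConQuotientAlgebra
    {R : Type*} [Ring R] [Algebra (ZMod 2) R] (c : RingCon R) :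
    Algebra (ZMod 2) c.Quotient :=
  RingHom.toAlgebra' ((RingCon.mk' c).comp (algebraMap (ZMod 2) R)) (by
    intro r x
    fin_cases r
    · exact (by simp : ((RingCon.mk' c).comp (algebraMap (ZMod 2) R)) 0 * x = x * ((RingCon.mk' c).comp (algebraMap (ZMod 2) R)) 0)
    · exact (by simp : ((RingCon.mk' c).comp (algebraMap (ZMod 2) R)) 1 * x = x * ((RingCon.mk' c).comp (algebraMap (ZMod 2) R)) 1))

/-- The generators of the free ℤ/2-algebra on two letters. -/
def b (i : Fin 2) : FreeAlgebra (ZMod 2) (Fin 2) := FreeAlgebra.ι (ZMod 2) i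

/-- The generators of the free ℤ/2-algebra on three letters. -/
def c (i : Fin 3) : FreeAlgebra (ZMod 2) (Fin 3) := FreeAlgebra.ι (ZMod 2) i

/-- The simplified characteristic algebra
`C₁ = ℤ₂⟨a₁, a₂⟩/(a₁a₂ − 1, a₂a₁ − 1)`. -/
def C1 := (TwoSidedIdeal.span {b 0 * b 1 - 1, b 1 * b 0 - 1}).ringCon.Quotient

instance : Ring C1 :=
  inferInstanceAs (Ring (TwoSidedIdeal.span {b 0 * b 1 - 1, b 1 * b 0 - 1}).ringCon.Quotient)
instance : Algebra (ZMod 2) C1 :=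
  inferInstanceAs
    (Algebra (ZMod 2) (TwoSidedIdeal.span {b 0 * b 1 - 1, b 1 * b 0 - 1}).ringCon.Quotient)

/-- The simplified characteristic algebra
`C₂ = ℤ₂⟨a₁, a₂, a₃⟩/(a₂a₁ − 1, a₂a₃ − 1)`. -/
def C2 := (TwoSidedIdeal.span {c 1 * c 0 - 1, c 1 * c 2 - 1}).ringCon.Quotient

instance : Ring C2 :=
  inferInstanceAs (Ring (TwoSidedIdeal.span {c 1 * c 0 - 1, c 1 * c 2 - 1}).ringCon.Quotient)
instance : Algebra (ZMod 2) C2 :=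
  inferInstanceAs
    (Algebra (ZMod 2) (TwoSidedIdeal.span {c 1 * c 0 - 1, c 1 * c 2 - 1}).ringCon.Quotient)

namespace NotIsoAux

/-! ### A representation of `C₂` distinguishing `a₁` from `a₃` -/

abbrev V := ℕ →₀ ZMod 2
abbrev A := Module.End (ZMod 2) V

def S : A := Finsupp.lcomapDomain (· + 1) (fun a b h => by simpa using h)
def R0 : A := Finsupp.lmapDomain (ZMod 2) (ZMod 2) (· + 1)
def R1 : A := R0 + (Finsupp.lsingle 0).comp (Finsupp.lapply (M := ZMod 2) (R := ZMod 2) 0)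

lemma S_apply (x : V) (n : ℕ) : (S x) n = x (n + 1) := rfl

lemma S_R0 : S * R0 = 1 := by
  refine LinearMap.ext fun x => Finsupp.ext fun n => ?_
  rw [Module.End.mul_apply, S_apply]
  simp [R0, Finsupp.mapDomain_apply (add_left_injective 1)]

lemma S_R1 : S * R1 = 1 := by
  refine LinearMap.ext fun x => Finsupp.ext fun n => ?_
  rw [Module.End.mul_apply, S_apply]
  simp [R1, R0, Finsupp.mapDomain_apply (add_left_injective 1), Finsupp.single_apply]

lemma R0_ne_R1 : R0 ≠ R1 := by
  intro h
  have := congrArg (fun f : A => (f (Finsupp.single 0 1)) 0) h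
  simp [R0, R1, Finsupp.mapDomain_single, Finsupp.single_apply] at this

/-- The representation of the free algebra on three letters. -/
def g : FreeAlgebra (ZMod 2) (Fin 3) →ₐ[ZMod 2] A :=
  FreeAlgebra.lift (ZMod 2) ![R0, S, R1]

lemma g_rel₁ : g (c 1 * c 0 - 1) = 0 := by
  simp [g, c, sub_eq_zero, Matrix.cons_val_zero, Matrix.cons_val_one]
  exact S_R0
lemma g_rel₂ : g (c 1 * c 2 - 1) = 0 := by
  simp [g, c, sub_eq_zero]
  exact S_R1

/-- The kernel of `g` as a two-sided ideal. -/
def K : TwoSidedIdeal (FreeAlgebra (ZMod 2) (Fin 3)) :=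
  TwoSidedIdeal.mk' {x | g x = 0} (map_zero g)
    (fun hx hy => by simp_all [Set.mem_setOf_eq, map_add])
    (fun hx => by simp_all [Set.mem_setOf_eq, map_neg])
    (fun hy => by simp_all [Set.mem_setOf_eq, map_mul])
    (fun hx => by simp_all [Set.mem_setOf_eq, map_mul])

lemma span_le_K : ∀ x ∈ TwoSidedIdeal.span {c 1 * c 0 - 1, c 1 * c 2 - 1}, x ∈ K := by
  intro x hx
  refine TwoSidedIdeal.mem_span_iff.mp hx K ?_
  rintro y (rfl | rfl)
  · simpa [K] using g_rel₁
  · simpa [K] using g_rel₂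

abbrev π₂ : FreeAlgebra (ZMod 2) (Fin 3) →+* C2 :=
  RingCon.mk' (TwoSidedIdeal.span {c 1 * c 0 - 1, c 1 * c 2 - 1}).ringCon

/-- `g` descends to `C₂`. -/
def g' : C2 → A :=
  Quotient.lift (g : FreeAlgebra (ZMod 2) (Fin 3) → A) (fun x y h => by
    have hxy : x - y ∈ TwoSidedIdeal.span {c 1 * c 0 - 1, c 1 * c 2 - 1} :=
      (TwoSidedIdeal.rel_iff _ _ _).mp h
    have : g (x - y) = 0 := by simpa [K] using span_le_K _ hxy
    rw [map_sub, sub_eq_zero] at this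
    exact this)

lemma g'_mk (x : FreeAlgebra (ZMod 2) (Fin 3)) : g' (π₂ x) = g x := rfl

lemma pi2_rel₁ : π₂ (c 1) * π₂ (c 0) = 1 := by
  rw [← map_mul, ← map_one π₂]
  exact (RingCon.eq _).mpr ((TwoSidedIdeal.rel_iff _ _ _).mpr
    (TwoSidedIdeal.subset_span (by simp)))

lemma pi2_rel₂ : π₂ (c 1) * π₂ (c 2) = 1 := by
  rw [← map_mul, ← map_one π₂]
  exact (RingCon.eq _).mpr ((TwoSidedIdeal.rel_iff _ _ _).mpr
    (TwoSidedIdeal.subset_span (by simp)))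

lemma pi2_ne : π₂ (c 0) ≠ π₂ (c 2) := by
  intro h
  have : g (c 0) = g (c 2) := by rw [← g'_mk, ← g'_mk, h]
  simp [g, c] at this
  exact R0_ne_R1 this

/-! ### Commutativity of `C₁` -/

abbrev π₁ : FreeAlgebra (ZMod 2) (Fin 2) →+* C1 :=
  RingCon.mk' (TwoSidedIdeal.span {b 0 * b 1 - 1, b 1 * b 0 - 1}).ringCon

lemma pi1_rel₁ : π₁ (b 0) * π₁ (b 1) = 1 := by
  rw [← map_mul, ← map_one π₁]
  exact (RingCon.eq _).mpr ((TwoSidedIdeal.rel_iff _ _ _).mpr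
    (TwoSidedIdeal.subset_span (by simp)))

lemma pi1_rel₂ : π₁ (b 1) * π₁ (b 0) = 1 := by
  rw [← map_mul, ← map_one π₁]
  exact (RingCon.eq _).mpr ((TwoSidedIdeal.rel_iff _ _ _).mpr
    (TwoSidedIdeal.subset_span (by simp)))

lemma pi1_surjective : Function.Surjective π₁ := fun x => Quotient.exists_rep x

lemma pi1_algebraMap (r : ZMod 2) : π₁ (algebraMap (ZMod 2) _ r) = algebraMap (ZMod 2) C1 r := rfl

lemma gens_commute : Commute (π₁ (b 0)) (π₁ (b 1)) := by
  unfold Commute SemiconjBy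
  rw [pi1_rel₁, pi1_rel₂]

lemma gen_central (i : Fin 2) (x : C1) : Commute (π₁ (b i)) x := by
  obtain ⟨w, rfl⟩ := pi1_surjective x
  induction w with
  | grade0 r => rw [pi1_algebraMap]; exact (Algebra.commutes r _).symm
  | grade1 j =>
      fin_cases i <;> fin_cases j
      · rfl
      · exact gens_commute
      · exact gens_commute.symm
      · rfl
  | mul x y hx hy => rw [map_mul]; exact hx.mul_right hy
  | add x y hx hy => rw [map_add]; exact hx.add_right hy

lemma C1_comm (x y : C1) : x * y = y * x := by
  obtain ⟨w, rfl⟩ := pi1_surjective x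
  induction w with
  | grade0 r => rw [pi1_algebraMap]; exact Algebra.commutes r y
  | grade1 j => exact gen_central j y
  | mul a b ha hb => rw [map_mul, mul_assoc, hb, ← mul_assoc, ha, mul_assoc]
  | add a b ha hb => rw [map_add, add_mul, ha, hb, mul_add]

end NotIsoAux

open NotIsoAux in
/-- There is no ℤ/2-algebra isomorphism between
`C₁ = ℤ₂⟨a₁, a₂⟩/(1 = a₁a₂ = a₂a₁)` and
`C₂ = ℤ₂⟨a₁, a₂, a₃⟩/(1 = a₂a₁ = a₂a₃)`. -/
theorem charAlgebras_not_isomorphic : IsEmpty (C1 ≃ₐ[ZMod 2] C2) := by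
  constructor
  intro e
  have h1 : e.symm (π₂ (c 1)) * e.symm (π₂ (c 0)) = 1 := by
    rw [← map_mul, pi2_rel₁, map_one]
  have h2 : e.symm (π₂ (c 0)) * e.symm (π₂ (c 1)) = 1 := by
    rw [C1_comm, h1]
  have h3 : π₂ (c 0) * π₂ (c 1) = 1 := by
    have := congrArg e h2
    rwa [map_mul, e.apply_symm_apply, e.apply_symm_apply, map_one] at this
  exact pi2_ne (by
    calc π₂ (c 0) = π₂ (c 0) * (π₂ (c 1) * π₂ (c 2)) := by rw [pi2_rel₂, mul_one]
    _ = (π₂ (c 0) * π₂ (c 1)) * π₂ (c 2) := by rw [mul_assoc]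
    _ = π₂ (c 2) := by rw [h3, one_mul])


end
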